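/- Let $(X, d, \mu)$ be a compact metric space equipped with a good measure $\mu$ (a Borel measure with no atoms assigning positive mass to every nonempty open set and with $0 < \mu(X) < \infty$). Suppose that for $\mu \times \mu \times \mathrm{Leb}$-almost every triple $(x, y, U)$ with $U \in [0,1]$, setting $r = U d(x,y)$ and $\bar{r} = d(x,y) - r$, there exists $z \in X$ with $d(x,z) = r$, $d(z,y) = \bar{r}$. Then $(X,d)$ is a geodesic metric space. -/

import Mathlib

open MeasureTheory Filter Topology
open scoped ENNReal

lemma exists_mid {X : Type*} [MetricSpace X] [CompactSpace X]
    [MeasurableSpace X] [BorelSpace X]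
    (μ : Measure X)
    (hopen : ∀ U : Set X, IsOpen U → U.Nonempty → 0 < μ U)
    (hfin : μ Set.univ < ⊤)
    (hmid : ∀ᵐ p ∂(μ.prod (μ.prod (volume.restrict (Set.Icc (0:ℝ) 1)))),
      ∃ z : X, dist p.1 z = p.2.2 * dist p.1 p.2.1 ∧
        dist z p.2.1 = dist p.1 p.2.1 - p.2.2 * dist p.1 p.2.1) :
    ∀ x y : X, ∃ z : X, dist x z = dist x y / 2 ∧ dist z y = dist x y / 2 := by
  haveI : IsFiniteMeasure μ := ⟨hfin⟩
  set S : Set (X × X × ℝ) := {p | ∃ z : X, dist p.1 z = p.2.2 * dist p.1 p.2.1 ∧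
      dist z p.2.1 = dist p.1 p.2.1 - p.2.2 * dist p.1 p.2.1} with hS
  have hSclosed : IsClosed S := by
    apply IsSeqClosed.isClosed
    intro u p hu hup
    choose z hz1 hz2 using hu
    obtain ⟨a, -, φ, hφ, hza⟩ := isCompact_univ.tendsto_subseq (fun n => Set.mem_univ (z n))
    have hu' : Tendsto (fun n => u (φ n)) atTop (𝓝 p) := hup.comp hφ.tendsto_atTop
    have h1 : Tendsto (fun n => (u (φ n)).1) atTop (𝓝 p.1) :=
      ((continuous_fst.tendsto p).comp hu')
    have h2 : Tendsto (fun n => (u (φ n)).2.1) atTop (𝓝 p.2.1) :=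
      ((continuous_fst.tendsto p.2).comp (((continuous_snd.tendsto p).comp hu')))
    have h3 : Tendsto (fun n => (u (φ n)).2.2) atTop (𝓝 p.2.2) :=
      ((continuous_snd.tendsto p.2).comp (((continuous_snd.tendsto p).comp hu')))
    refine ⟨a, ?_, ?_⟩
    · refine tendsto_nhds_unique (h1.dist hza) ?_
      have : Tendsto (fun n => (u (φ n)).2.2 * dist (u (φ n)).1 (u (φ n)).2.1) atTop
          (𝓝 (p.2.2 * dist p.1 p.2.1)) := h3.mul (h1.dist h2)
      exact Tendsto.congr (fun n => (hz1 (φ n)).symm) this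
    · refine tendsto_nhds_unique (hza.dist h2) ?_
      have : Tendsto (fun n => dist (u (φ n)).1 (u (φ n)).2.1
          - (u (φ n)).2.2 * dist (u (φ n)).1 (u (φ n)).2.1) atTop
          (𝓝 (dist p.1 p.2.1 - p.2.2 * dist p.1 p.2.1)) := (h1.dist h2).sub (h3.mul (h1.dist h2))
      exact Tendsto.congr (fun n => (hz2 (φ n)).symm) this
  have hnull : (μ.prod (μ.prod (volume.restrict (Set.Icc (0:ℝ) 1)))) Sᶜ = 0 := by
    rw [Set.compl_setOf]
    simpa [hS, ae_iff] using hmid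
  intro x y
  by_contra hcon
  have hmem : ((x, (y, (1/2 : ℝ))) : X × X × ℝ) ∈ Sᶜ := by
    intro hc
    obtain ⟨z, hz1, hz2⟩ := hc
    exact hcon ⟨z, by simpa using hz1.trans (by ring), by simpa using hz2.trans (by ring)⟩
  obtain ⟨ε, hε, hball⟩ := Metric.isOpen_iff.1 hSclosed.isOpen_compl _ hmem
  have hb : (Metric.ball x ε ×ˢ (Metric.ball y ε ×ˢ Metric.ball (1/2 : ℝ) ε)) ⊆ Sᶜ := by
    rw [ball_prod_same, ball_prod_same]; exact hball
  set δ := min ε (1/2 : ℝ) with hδ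
  have hδpos : 0 < δ := lt_min hε (by norm_num)
  have hsub : Set.Ioo ((1:ℝ)/2 - δ) (1/2) ⊆ Metric.ball (1/2 : ℝ) ε ∩ Set.Icc 0 1 := by
    intro t ht
    obtain ⟨ht1, ht2⟩ := ht
    constructor
    · rw [Metric.mem_ball, Real.dist_eq]
      have : |t - 1/2| = 1/2 - t := by rw [abs_of_nonpos (by linarith)]; ring
      rw [this]
      have := min_le_left ε (1/2 : ℝ)
      simp only [hδ] at ht1
      linarith [min_le_left ε (1/2 : ℝ)]
    · constructor
      · have := min_le_right ε (1/2 : ℝ); simp only [hδ] at ht1; linarith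
      · linarith
  have hv : 0 < (volume.restrict (Set.Icc (0:ℝ) 1)) (Metric.ball (1/2 : ℝ) ε) := by
    rw [Measure.restrict_apply measurableSet_ball]
    calc (0 : ℝ≥0∞) < volume (Set.Ioo ((1:ℝ)/2 - δ) (1/2)) := by
          rw [Real.volume_Ioo]
          simp only [ENNReal.ofReal_pos]
          linarith
      _ ≤ _ := measure_mono hsub
  have hpos' : 0 < (μ.prod (μ.prod (volume.restrict (Set.Icc (0:ℝ) 1))))
      (Metric.ball x ε ×ˢ (Metric.ball y ε ×ˢ Metric.ball (1/2 : ℝ) ε)) := by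
    rw [Measure.prod_prod, Measure.prod_prod]
    exact ENNReal.mul_pos (hopen _ Metric.isOpen_ball ⟨x, Metric.mem_ball_self hε⟩).ne'
      (ENNReal.mul_pos (hopen _ Metric.isOpen_ball ⟨y, Metric.mem_ball_self hε⟩).ne' hv.ne').ne'
  exact hpos'.ne' (le_antisymm (le_of_le_of_eq (measure_mono hb) hnull) zero_le)

private def gf {X : Type*} (m : X → X → X) (x y : X) : ℕ → ℕ → X
  | 0, k => if k = 0 then x else y
  | (n+1), k => if k % 2 = 0 then gf m x y n (k/2)
      else m (gf m x y n (k/2)) (gf m x y n (k/2+1))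

section gflemmas
variable {X : Type*} [MetricSpace X] (m : X → X → X) (x y : X)
  (hm1 : ∀ a b : X, dist a (m a b) = dist a b / 2)
  (hm2 : ∀ a b : X, dist (m a b) b = dist a b / 2)

set_option linter.unusedSectionVars false

private lemma gf_zero : ∀ n, gf m x y n 0 = x := by
  intro n; induction n with
  | zero => simp [gf]
  | succ n ih => simpa [gf] using ih

include hm1 in
private lemma gf_top : ∀ n k, 2^n ≤ k → gf m x y n k = y := by
  intro n; induction n with
  | zero => intro k hk; have : k ≠ 0 := by omega
            simp [gf, this]
  | succ n ih =>
      intro k hk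
      have h2 : 2^(n+1) = 2 * 2^n := by ring
      by_cases h : k % 2 = 0
      · simp only [gf, h, if_true]
        exact ih _ (by omega)
      · simp only [gf, h, if_false]
        rw [ih (k/2) (by omega), ih (k/2+1) (by omega)]
        have : dist y (m y y) = 0 := by rw [hm1]; simp
        exact (dist_eq_zero.1 this).symm

include hm1 hm2 in
private lemma gf_adj : ∀ n k, k < 2^n →
    dist (gf m x y n k) (gf m x y n (k+1)) = dist x y / 2^n := by
  intro n; induction n with
  | zero => intro k hk
            have : k = 0 := by omega
            subst this; simp [gf]
  | succ n ih =>
      intro k hk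
      have h2 : 2^(n+1) = 2 * 2^n := by ring
      rcases Nat.even_or_odd k with ⟨j, hj⟩ | ⟨j, hj⟩
      · subst hj
        have hk0 : (j + j) % 2 = 0 := by omega
        have hk1 : (j + j + 1) % 2 = 1 := by omega
        have e0 : (j + j) / 2 = j := by omega
        have e1 : (j + j + 1) / 2 = j := by omega
        simp only [gf, hk0, hk1, if_true, if_false, e0, e1]
        simp only [Nat.one_ne_zero, if_false, reduceIte]
        rw [hm1, ih j (by omega)]
        rw [pow_succ]; ring
      · subst hj
        have hk0 : (2*j + 1) % 2 = 1 := by omega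
        have hk1 : (2*j + 1 + 1) % 2 = 0 := by omega
        have e0 : (2*j + 1) / 2 = j := by omega
        have e1 : (2*j + 1 + 1) / 2 = j + 1 := by omega
        simp only [gf, hk0, hk1, if_true, if_false, e0, e1]
        simp only [Nat.one_ne_zero, if_false, reduceIte]
        rw [hm2, ih j (by omega)]
        rw [pow_succ]; ring

include hm1 hm2 in
private lemma gf_chain_le : ∀ n j k, j ≤ k → k ≤ 2^n →
    dist (gf m x y n j) (gf m x y n k) ≤ ((k:ℝ) - j) * (dist x y / 2^n) := by
  intro n j k
  induction k with
  | zero => intro hj _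
            have : j = 0 := by omega
            subst this; simp
  | succ k ih =>
      intro hj hk
      rcases Nat.lt_or_ge j (k+1) with h | h
      · have hj' : j ≤ k := by omega
        calc dist (gf m x y n j) (gf m x y n (k+1))
            ≤ dist (gf m x y n j) (gf m x y n k) + dist (gf m x y n k) (gf m x y n (k+1)) :=
              dist_triangle _ _ _
          _ ≤ ((k:ℝ) - j) * (dist x y / 2^n) + dist x y / 2^n := by
              refine add_le_add (ih hj' (by omega)) (le_of_eq (gf_adj m x y hm1 hm2 n k (by omega)))
          _ = (((k+1:ℕ):ℝ) - j) * (dist x y / 2^n) := by push_cast; ring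
      · have : j = k + 1 := by omega
        subst this; simp

include hm1 hm2 in
private lemma gf_eq : ∀ n j k, j ≤ k → k ≤ 2^n →
    dist (gf m x y n j) (gf m x y n k) = ((k:ℝ) - j) * (dist x y / 2^n) := by
  intro n j k hj hk
  refine le_antisymm (gf_chain_le m x y hm1 hm2 n j k hj hk) ?_
  have l1 : dist x (gf m x y n j) ≤ (j:ℝ) * (dist x y / 2^n) := by
    have := gf_chain_le m x y hm1 hm2 n 0 j (Nat.zero_le _) (le_trans hj hk)
    rwa [gf_zero, Nat.cast_zero, sub_zero] at this
  have l2 : dist (gf m x y n k) y ≤ ((2^n:ℝ) - k) * (dist x y / 2^n) := by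
    have := gf_chain_le m x y hm1 hm2 n k (2^n) hk le_rfl
    rwa [gf_top m x y hm1 n (2^n) le_rfl, Nat.cast_pow, Nat.cast_ofNat] at this
  have ht : dist x y ≤ dist x (gf m x y n j) + dist (gf m x y n j) (gf m x y n k)
      + dist (gf m x y n k) y := dist_triangle4 _ _ _ _
  have hd : ((2:ℝ)^n) * (dist x y / 2^n) = dist x y := by
    field_simp
  linarith

include hm1 hm2 in
private lemma gf_eq_abs : ∀ n j k, j ≤ 2^n → k ≤ 2^n →
    dist (gf m x y n j) (gf m x y n k) = |(j:ℝ) - k| * (dist x y / 2^n) := by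
  intro n j k hj hk
  rcases le_total j k with h | h
  · rw [gf_eq m x y hm1 hm2 n j k h hk, abs_of_nonpos (by
      simp only [sub_nonpos]; exact_mod_cast h), neg_sub]
  · rw [dist_comm, gf_eq m x y hm1 hm2 n k j h hj, abs_of_nonneg (by
      simp only [sub_nonneg]; exact_mod_cast h)]

private lemma gf_refine : ∀ n p k, gf m x y (n+p) (k * 2^p) = gf m x y n k := by
  intro n p
  induction p with
  | zero => intro k; simp
  | succ p ih =>
      intro k
      have e : k * 2^(p+1) = 2 * (k * 2^p) := by ring
      have h0 : (2 * (k * 2^p)) % 2 = 0 := by omega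
      have h1 : (2 * (k * 2^p)) / 2 = k * 2^p := by omega
      rw [e, show n + (p+1) = (n+p) + 1 from rfl]
      have h3 : gf m x y ((n+p)+1) (2*(k*2^p)) = gf m x y (n+p) ((2*(k*2^p))/2) := by
        simp [gf, Nat.mul_mod_right]
      rw [h3, h1, ih k]

end gflemmas

/-- A compact metric measure space with a good measure in which almost every pair of
points admits approximate midpoints at every random fraction of the distance is a
geodesic metric space. -/
theorem stmt_10 {X : Type*} [MetricSpace X] [CompactSpace X]
    [MeasurableSpace X] [BorelSpace X]
    (μ : Measure X)
    (hatoms : ∀ x : X, μ {x} = 0)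
    (hopen : ∀ U : Set X, IsOpen U → U.Nonempty → 0 < μ U)
    (hfin : μ Set.univ < ⊤) (hpos : 0 < μ Set.univ)
    (hmid : ∀ᵐ p ∂(μ.prod (μ.prod (volume.restrict (Set.Icc (0:ℝ) 1)))),
      ∃ z : X, dist p.1 z = p.2.2 * dist p.1 p.2.1 ∧
        dist z p.2.1 = dist p.1 p.2.1 - p.2.2 * dist p.1 p.2.1) :
    ∀ x y : X, ∃ γ : ℝ → X, γ 0 = x ∧ γ (dist x y) = y ∧
      ∀ s ∈ Set.Icc (0:ℝ) (dist x y), ∀ t ∈ Set.Icc (0:ℝ) (dist x y),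
        dist (γ s) (γ t) = |s - t| := by
  obtain ⟨m, hm⟩ : ∃ m : X → X → X, ∀ a b : X,
      dist a (m a b) = dist a b / 2 ∧ dist (m a b) b = dist a b / 2 := by
    have h := exists_mid μ hopen hfin hmid
    choose m h1 h2 using h
    exact ⟨m, fun a b => ⟨h1 a b, h2 a b⟩⟩
  have hm1 : ∀ a b : X, dist a (m a b) = dist a b / 2 := fun a b => (hm a b).1
  have hm2 : ∀ a b : X, dist (m a b) b = dist a b / 2 := fun a b => (hm a b).2
  intro x y
  by_cases hd0 : dist x y = 0
  · refine ⟨fun _ => x, rfl, (dist_eq_zero.1 hd0), ?_⟩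
    intro s hs t ht
    rw [hd0] at hs ht
    have hs0 : s = 0 := le_antisymm hs.2 hs.1
    have ht0 : t = 0 := le_antisymm ht.2 ht.1
    subst hs0; subst ht0; simp
  set d := dist x y with hd
  have hdpos : 0 < d := lt_of_le_of_ne dist_nonneg (Ne.symm hd0)
  haveI : Nonempty X := ⟨x⟩
  set c : ℝ → ℝ := fun s => max 0 (min s d) with hc
  set idx : ℝ → ℕ → ℕ := fun s n => ⌊c s * 2^n / d⌋₊ with hidx
  set g : ℝ → ℕ → X := fun s n => gf m x y n (idx s n) with hg
  have hc0 : ∀ s, 0 ≤ c s := fun s => le_max_left _ _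
  have hcd : ∀ s, c s ≤ d := fun s => max_le hdpos.le (min_le_right _ _)
  have hcs : ∀ s ∈ Set.Icc (0:ℝ) d, c s = s := by
    intro s hs
    rw [hc]; simp only
    rw [min_eq_left hs.2, max_eq_right hs.1]
  have hidx_le : ∀ s n, idx s n ≤ 2^n := by
    intro s n
    have hp : (0:ℝ) < 2^n := by positivity
    have h1 : c s * 2^n / d ≤ ((2^n : ℕ) : ℝ) := by
      rw [div_le_iff₀ hdpos]; push_cast
      nlinarith [hc0 s, hcd s]
    calc idx s n ≤ ⌊((2^n:ℕ):ℝ)⌋₊ := Nat.floor_le_floor h1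
      _ = 2^n := Nat.floor_natCast _
  have happrox : ∀ s n, |(idx s n : ℝ) * (d / 2^n) - c s| ≤ d / 2^n := by
    intro s n
    have hp : (0:ℝ) < 2^n := by positivity
    have hnn : 0 ≤ c s * 2^n / d := by positivity
    have h1 : (idx s n : ℝ) ≤ c s * 2^n / d := Nat.floor_le hnn
    have h2 : c s * 2^n / d < (idx s n : ℝ) + 1 := Nat.lt_floor_add_one _
    have e1 : (idx s n : ℝ) * (d/2^n) ≤ c s := by
      calc (idx s n : ℝ)*(d/2^n) ≤ (c s * 2^n / d)*(d/2^n) :=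
            mul_le_mul_of_nonneg_right h1 (by positivity)
        _ = c s := by field_simp
    have e2 : c s < ((idx s n : ℝ)+1) * (d/2^n) := by
      calc c s = (c s * 2^n / d)*(d/2^n) := by field_simp
        _ < _ := mul_lt_mul_of_pos_right h2 (by positivity)
    rw [abs_le]
    constructor <;> nlinarith [div_pos hdpos hp]
  have hdist : ∀ s t n, dist (g s n) (g t n) = |(idx s n:ℝ) - idx t n| * (d/2^n) :=
    fun s t n => gf_eq_abs m x y hm1 hm2 n _ _ (hidx_le s n) (hidx_le t n)
  have habs : ∀ (j k : ℕ) (n : ℕ), |(j:ℝ) - k| * (d/2^n)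
      = |(j:ℝ)*(d/2^n) - (k:ℝ)*(d/2^n)| := by
    intro j k n
    rw [← sub_mul, abs_mul, abs_of_nonneg (show (0:ℝ) ≤ d/2^n by positivity)]
  have hkey : ∀ s t n, abs (dist (g s n) (g t n) - |c s - c t|) ≤ 2 * (d/2^n) := by
    intro s t n
    have ha := happrox s n
    have hb := happrox t n
    rw [hdist s t n, habs]
    set a := (idx s n:ℝ)*(d/2^n) with hadef
    set b := (idx t n:ℝ)*(d/2^n) with hbdef
    calc abs (|a - b| - |c s - c t|) ≤ |(a - b) - (c s - c t)| :=
          abs_abs_sub_abs_le_abs_sub _ _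
      _ = |(a - c s) - (b - c t)| := by ring_nf
      _ ≤ |a - c s| + |b - c t| := abs_sub _ _
      _ ≤ d/2^n + d/2^n := add_le_add ha hb
      _ = 2*(d/2^n) := by ring
  have hbound0 : ∀ C : ℝ, Tendsto (fun n : ℕ => C*(d/2^n)) atTop (𝓝 0) := by
    intro C
    have he : (fun n:ℕ => C*(d/2^n)) = fun n:ℕ => (C*d) * (1/2:ℝ)^n := by
      funext n
      rw [div_pow, one_pow]
      field_simp
    rw [he]
    have := (tendsto_pow_atTop_nhds_zero_of_lt_one
      (by norm_num : (0:ℝ) ≤ 1/2) (by norm_num : (1/2:ℝ) < 1)).const_mul (C*d)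
    simpa using this
  have hstep : ∀ s n N, n ≤ N → dist (g s n) (g s N) ≤ 2*(d/2^n) := by
    intro s n N hnN
    have e : g s n = gf m x y N (idx s n * 2^(N-n)) := by
      have h := gf_refine m x y n (N-n) (idx s n)
      rw [show n + (N-n) = N from by omega] at h
      exact h.symm
    have hj : idx s n * 2^(N-n) ≤ 2^N := by
      calc idx s n * 2^(N-n) ≤ 2^n * 2^(N-n) := Nat.mul_le_mul_right _ (hidx_le s n)
        _ = 2^N := by rw [← pow_add]; congr 1; omega
    have hE : dist (g s n) (g s N) =
        |(↑(idx s n * 2^(N-n)):ℝ) - idx s N| * (d/2^N) := by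
      rw [e]
      exact gf_eq_abs m x y hm1 hm2 N _ _ hj (hidx_le s N)
    have hpn : (0:ℝ) < 2^n := by positivity
    have hpN : (0:ℝ) < 2^N := by positivity
    have hcast : ((idx s n * 2^(N-n) : ℕ) : ℝ) * (d/2^N) = (idx s n : ℝ) * (d/2^n) := by
      push_cast
      have h2 : (2:ℝ)^(N-n) * 2^n = 2^N := by rw [← pow_add]; congr 1; omega
      field_simp
      linear_combination (idx s n : ℝ) * h2
    have ha := happrox s n
    have hb := happrox s N
    have hle : d/2^N ≤ d/2^n := by
      apply div_le_div_of_nonneg_left hdpos.le hpn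
      exact pow_le_pow_right₀ (by norm_num) hnN
    rw [hE, habs, hcast]
    calc |(idx s n : ℝ)*(d/2^n) - (idx s N : ℝ)*(d/2^N)|
        = |((idx s n : ℝ)*(d/2^n) - c s) - ((idx s N : ℝ)*(d/2^N) - c s)| := by ring_nf
      _ ≤ |(idx s n : ℝ)*(d/2^n) - c s| + |(idx s N : ℝ)*(d/2^N) - c s| := abs_sub _ _
      _ ≤ d/2^n + d/2^N := add_le_add ha hb
      _ ≤ 2*(d/2^n) := by linarith
  have hcauchy : ∀ s, CauchySeq (g s) := by
    intro s
    apply cauchySeq_of_le_tendsto_0 (fun n => 4*(d/2^n)) ?_ (hbound0 4)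
    intro n p N hn hp
    calc dist (g s n) (g s p) ≤ dist (g s N) (g s n) + dist (g s N) (g s p) :=
          dist_triangle_left _ _ _
      _ ≤ 2*(d/2^N) + 2*(d/2^N) := add_le_add (hstep s N n hn) (hstep s N p hp)
      _ = 4*(d/2^N) := by ring
  have hγ : ∀ s, Tendsto (g s) atTop (𝓝 (limUnder atTop (g s))) :=
    fun s => (hcauchy s).tendsto_limUnder
  refine ⟨fun s => limUnder atTop (g s), ?_, ?_, ?_⟩
  · have hgz : g 0 = fun _ => x := by
      funext n
      rw [hg]; simp only
      have hc' : c 0 = 0 := by rw [hc]; simp [min_eq_left hdpos.le]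
      have : idx 0 n = 0 := by rw [hidx]; simp only; rw [hc']; simp
      rw [this]
      exact gf_zero m x y n
    exact Tendsto.limUnder_eq (by rw [hgz]; exact tendsto_const_nhds)
  · have hgd : g d = fun _ => y := by
      funext n
      rw [hg]; simp only
      have hc' : c d = d := by rw [hc]; simp [min_self, max_eq_right hdpos.le]
      have : idx d n = 2^n := by
        rw [hidx]; simp only; rw [hc']
        have : d * 2^n / d = ((2^n : ℕ) : ℝ) := by push_cast; field_simp
        rw [this, Nat.floor_natCast]
      rw [this]
      exact gf_top m x y hm1 n _ le_rfl
    exact Tendsto.limUnder_eq (by rw [hgd]; exact tendsto_const_nhds)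
  · intro s hs t ht
    have h1 : Tendsto (fun n => dist (g s n) (g t n)) atTop
        (𝓝 (dist (limUnder atTop (g s)) (limUnder atTop (g t)))) := (hγ s).dist (hγ t)
    have h2 : Tendsto (fun n => dist (g s n) (g t n)) atTop (𝓝 |s - t|) := by
      rw [tendsto_iff_dist_tendsto_zero]
      apply squeeze_zero (fun n => dist_nonneg) (fun n => ?_) (hbound0 2)
      rw [Real.dist_eq]
      have := hkey s t n
      rwa [hcs s hs, hcs t ht] at this
    exact tendsto_nhds_unique h1 h2
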